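/- Let J be a group, let n ≥ 5, and let X = J × Fin n with J acting by left multiplication on the first coordinate. If Q is a simple group and φ : Rub_J(X) → Q is a surjective group homomorphism, then Q is isomorphic to the alternating group on Fin n. -/

import Mathlib

open scoped commutatorElement

theorem Equiv.Perm.apply_inv_self {α : Type*} (f : Equiv.Perm α) (x : α) : f (f⁻¹ x) = x :=
  Equiv.apply_symm_apply f x

theorem Equiv.Perm.inv_apply_self {α : Type*} (f : Equiv.Perm α) (x : α) : f⁻¹ (f x) = x :=
  Equiv.symm_apply_apply f x


/-- The subgroup `Sym_J(X)` of permutations of `X = J × Fin n` commuting with the left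
multiplication action of `J` on the first coordinate. -/
def EquivariantPerm (J : Type*) [Group J] (n : ℕ) : Subgroup (Equiv.Perm (J × Fin n)) where
  carrier := {σ | ∀ (j : J) (x : J × Fin n), σ (j * x.1, x.2) = (j * (σ x).1, (σ x).2)}
  one_mem' := by intro j x; rfl
  mul_mem' := by
    intro σ τ hσ hτ j x
    simp only [Equiv.Perm.mul_apply]
    rw [hτ, hσ]
  inv_mem' := by
    intro σ hσ j x
    apply σ.injective
    rw [hσ]
    simp

/-- The Rubik group `Rub_J(X)`: the commutator subgroup of `Sym_J(X)`, regarded as a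
subgroup of the symmetric group of `X = J × Fin n`. -/
def RubikGroup (J : Type*) [Group J] (n : ℕ) : Subgroup (Equiv.Perm (J × Fin n)) :=
  ⁅EquivariantPerm J n, EquivariantPerm J n⁆

namespace Stmt10

open Equiv Equiv.Perm Subgroup

variable {J : Type*} [Group J] {n : ℕ}

def emk (v : Fin n → J) (π : Perm (Fin n)) : Perm (J × Fin n) where
  toFun := fun x => (x.1 * v x.2, π x.2)
  invFun := fun x => (x.1 * (v (π⁻¹ x.2))⁻¹, π⁻¹ x.2)
  left_inv := by
    intro x
    simp
  right_inv := by
    intro x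
    simp

lemma emk_mem (v : Fin n → J) (π : Perm (Fin n)) : emk v π ∈ EquivariantPerm J n := by
  intro j x
  simp [emk, EquivariantPerm, mul_assoc]

def em (v : Fin n → J) (π : Perm (Fin n)) : ↥(EquivariantPerm J n) :=
  ⟨emk v π, emk_mem v π⟩

@[simp] lemma em_coe_apply (v : Fin n → J) (π : Perm (Fin n)) (x : J × Fin n) :
    (em v π : Perm (J × Fin n)) x = (x.1 * v x.2, π x.2) := rfl

lemma mem_equivariant (σ : ↥(EquivariantPerm J n)) (j : J) (x : J × Fin n) :
    (σ : Perm (J × Fin n)) (j * x.1, x.2) =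
      (j * ((σ : Perm (J × Fin n)) x).1, ((σ : Perm (J × Fin n)) x).2) := σ.2 j x

def pf : ↥(EquivariantPerm J n) →* Function.End (Fin n) where
  toFun σ := fun i => ((σ : Perm (J × Fin n)) (1, i)).2
  map_one' := rfl
  map_mul' σ τ := by
    funext i
    show ((σ : Perm (J × Fin n)) ((τ : Perm (J × Fin n)) (1, i))).2 = _
    have h := mem_equivariant σ ((τ : Perm (J × Fin n)) (1, i)).1
      (1, ((τ : Perm (J × Fin n)) (1, i)).2)
    simp only [mul_one] at h
    change ((σ : Perm (J × Fin n))
      (((τ : Perm (J × Fin n)) (1, i)).1, ((τ : Perm (J × Fin n)) (1, i)).2)).2 = _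
    rw [h]
    rfl

def toPHom : ↥(EquivariantPerm J n) →* Perm (Fin n) :=
  (Equiv.Perm.equivUnitsEnd.symm.toMonoidHom).comp pf.toHomUnits

lemma toP_apply (σ : ↥(EquivariantPerm J n)) (i : Fin n) :
    toPHom σ i = ((σ : Perm (J × Fin n)) (1, i)).2 := rfl

def bv (σ : ↥(EquivariantPerm J n)) : Fin n → J := fun i => ((σ : Perm (J × Fin n)) (1, i)).1

lemma apply_eq (σ : ↥(EquivariantPerm J n)) (x : J × Fin n) :
    (σ : Perm (J × Fin n)) x = (x.1 * bv σ x.2, toPHom σ x.2) := by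
  have h := mem_equivariant σ x.1 (1, x.2)
  simp only [mul_one] at h
  rw [show ((1 : J), x.2) = ((1,x.2) : J × Fin n) from rfl] at h
  calc (σ : Perm (J × Fin n)) x = (σ : Perm (J × Fin n)) (x.1, x.2) := by rw [Prod.mk.eta]
  _ = _ := by rw [h]; rfl

lemma eq_em (σ : ↥(EquivariantPerm J n)) : σ = em (bv σ) (toPHom σ) := by
  apply Subtype.ext
  apply Equiv.ext
  intro x
  rw [apply_eq]
  rfl

lemma em_mul (v w : Fin n → J) (π σ : Perm (Fin n)) :
    em v π * em w σ = em (fun i => w i * v (σ i)) (π * σ) := by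
  apply Subtype.ext
  apply Equiv.ext
  intro x
  simp [mul_assoc]

lemma em_one : (em (fun _ => (1:J)) 1 : ↥(EquivariantPerm J n)) = 1 := by
  apply Subtype.ext
  apply Equiv.ext
  intro x
  simp

lemma em_inv (v : Fin n → J) (π : Perm (Fin n)) :
    (em v π)⁻¹ = em (fun i => (v (π⁻¹ i))⁻¹) π⁻¹ := by
  apply inv_eq_of_mul_eq_one_right
  rw [em_mul]
  convert em_one using 2
  · funext i
    simp
  · simp

lemma toP_em (v : Fin n → J) (π : Perm (Fin n)) : toPHom (em v π) = π := by
  apply Equiv.ext; intro i; rfl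

lemma toPHom_surjective : Function.Surjective (toPHom (J := J) (n := n)) :=
  fun π => ⟨em (fun _ => 1) π, toP_em _ _⟩


def RE (J : Type*) [Group J] (n : ℕ) : Subgroup ↥(EquivariantPerm J n) :=
  ⁅(⊤ : Subgroup ↥(EquivariantPerm J n)), ⊤⁆

lemma coe_RubikGroup : Subgroup.map (EquivariantPerm J n).subtype (RE J n) = RubikGroup J n := by
  rw [RE, Subgroup.map_commutator, ← MonoidHom.range_eq_map, Subgroup.range_subtype]
  rfl

lemma mem_RE_iff (x : ↥(EquivariantPerm J n)) :
    x ∈ RE J n ↔ (x : Perm (J × Fin n)) ∈ RubikGroup J n := by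
  constructor
  · intro h
    have := Subgroup.mem_map_of_mem (EquivariantPerm J n).subtype h
    rwa [coe_RubikGroup] at this
  · intro h
    rw [← coe_RubikGroup] at h
    rcases Subgroup.mem_map.mp h with ⟨y, hy, hyx⟩
    have : y = x := Subtype.ext hyx
    rwa [this] at hy

def Pa : ↥(EquivariantPerm J n) →* Abelianization J where
  toFun σ := ∏ i, Abelianization.of (bv σ i)
  map_one' := by
    have : ∀ i : Fin n, bv (1 : ↥(EquivariantPerm J n)) i = 1 := fun i => rfl
    simp [this]
  map_mul' σ τ := by
    have hb : ∀ i, bv (σ * τ) i = bv τ i * bv σ (toPHom τ i) := by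
      intro i
      show ((σ : Perm (J × Fin n)) ((τ : Perm (J × Fin n)) (1, i))).1 = _
      rw [apply_eq σ]
      rfl
    calc ∏ i, Abelianization.of (bv (σ * τ) i)
        = ∏ i, (Abelianization.of (bv τ i) * Abelianization.of (bv σ (toPHom τ i))) := by
          simp [hb]
      _ = (∏ i, Abelianization.of (bv τ i)) * ∏ i, Abelianization.of (bv σ (toPHom τ i)) := by
          rw [Finset.prod_mul_distrib]
      _ = (∏ i, Abelianization.of (bv σ i)) * ∏ i, Abelianization.of (bv τ i) := by
          rw [Equiv.prod_comp (toPHom τ) (fun j => Abelianization.of (bv σ j))]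
          exact mul_comm _ _

lemma RE_le_ker_Pa : RE J n ≤ (Pa (J := J) (n := n)).ker := by
  rw [RE]
  rw [Subgroup.commutator_le]
  intro g _ h _
  rw [MonoidHom.mem_ker, map_commutatorElement]
  exact commutatorElement_eq_one_iff_mul_comm.mpr (mul_comm _ _)

lemma Pa_em (v : Fin n → J) (π : Perm (Fin n)) :
    Pa (em v π) = ∏ i, Abelianization.of (v i) := by
  show ∏ i, Abelianization.of (bv (em v π) i) = _
  apply Finset.prod_congr rfl
  intro i _
  show Abelianization.of (1 * v i) = _
  rw [one_mul]

/-- single-coordinate vector -/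
def sv (i : Fin n) (t : J) : Fin n → J := fun m => if m = i then t else 1

/-- two-coordinate vector `t` at `i`, `t⁻¹` at `k` -/
def dv (i k : Fin n) (t : J) : Fin n → J := fun m => if m = i then t else if m = k then t⁻¹ else 1

def se (i : Fin n) (t : J) : ↥(EquivariantPerm J n) := em (sv i t) 1

def dd (i k : Fin n) (t : J) : ↥(EquivariantPerm J n) := em (dv i k t) 1

lemma emb_mul (v v' : Fin n → J) :
    em v 1 * em v' 1 = em (fun m => v' m * v m) 1 := by
  rw [em_mul, mul_one]
  rfl

lemma emb_inv (v : Fin n → J) : (em v 1)⁻¹ = em (fun m => (v m)⁻¹) 1 := by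
  rw [em_inv, inv_one]
  rfl

lemma comm_em (v : Fin n → J) (σ : Perm (Fin n)) :
    ⁅em v 1, em (fun _ => (1:J)) σ⁆ = em (fun j => (v (σ⁻¹ j))⁻¹ * v j) 1 := by
  rw [commutatorElement_def, em_inv, em_inv, em_mul, em_mul, em_mul]
  apply Subtype.ext
  apply Equiv.ext
  intro x
  simp [mul_assoc]

lemma conj_emb (w : Fin n → J) (τ : Perm (Fin n)) (v : Fin n → J) :
    em w τ * em v 1 * (em w τ)⁻¹ =
      em (fun m => (w (τ⁻¹ m))⁻¹ * v (τ⁻¹ m) * w (τ⁻¹ m)) 1 := by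
  rw [em_inv, em_mul, em_mul]
  apply Subtype.ext
  apply Equiv.ext
  intro x
  simp [mul_assoc]

lemma se_mul (i : Fin n) (a b : J) : se i a * se i b = se i (b * a) := by
  rw [se, se, se, emb_mul]
  congr 1
  funext m
  by_cases h : m = i <;> simp [sv, h]

lemma se_one (i : Fin n) : se i (1:J) = 1 := by
  rw [se, ← em_one]
  congr 1
  funext m
  by_cases h : m = i <;> simp [sv, h]

lemma se_inv (i : Fin n) (a : J) : (se i a)⁻¹ = se i a⁻¹ := by
  rw [se, se, emb_inv]
  congr 1
  funext m
  by_cases h : m = i <;> simp [sv, h]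

lemma dd_mem (i k : Fin n) (hik : i ≠ k) (t : J) : dd i k t ∈ RE J n := by
  have key : dd i k t = ⁅se i t, em (fun _ => (1:J)) (Equiv.swap i k)⁆ := by
    rw [dd, se, comm_em]
    congr 1
    funext j
    by_cases hj : j = i
    · subst hj
      rw [Equiv.swap_inv, Equiv.swap_apply_left]
      simp [sv, dv, hik, hik.symm]
    · by_cases hjk : j = k
      · subst hjk
        rw [Equiv.swap_inv, Equiv.swap_apply_right]
        simp [sv, dv, hik, hik.symm, hj]
      · rw [Equiv.swap_inv, Equiv.swap_apply_of_ne_of_ne hj hjk]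
        simp [sv, dv, hj, hjk]
  rw [key]
  exact Subgroup.commutator_mem_commutator (Subgroup.mem_top _) (Subgroup.mem_top _)

lemma se_mem (i : Fin n) {u : J} (hu : u ∈ commutator J) : se i u ∈ RE J n := by
  let S : Subgroup J :=
    { carrier := {u | se i u ∈ RE J n}
      one_mem' := by
        show se i 1 ∈ RE J n
        rw [se_one]; exact one_mem _
      mul_mem' := by
        intro a b ha hb
        show se i (a * b) ∈ RE J n
        rw [← se_mul]
        exact mul_mem hb ha
      inv_mem' := by
        intro a ha
        show se i a⁻¹ ∈ RE J n
        rw [← se_inv]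
        exact inv_mem ha }
  have hle : commutator J ≤ S := by
    rw [_root_.commutator_def, Subgroup.commutator_le]
    intro g _ h _
    show se i ⁅g, h⁆ ∈ RE J n
    have : se i ⁅g, h⁆ = ⁅se i h⁻¹, se i g⁻¹⁆ := by
      rw [commutatorElement_def, commutatorElement_def, se_inv, se_inv, inv_inv, inv_inv,
        se_mul, se_mul, se_mul]
      congr 1
      group
    rw [this]
    exact Subgroup.commutator_mem_commutator (Subgroup.mem_top _) (Subgroup.mem_top _)
  exact hle hu


end Stmt10

namespace AltSimple

open Equiv Equiv.Perm Subgroup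

variable {α : Type*} [DecidableEq α] [Fintype α]

/-- the 3-cycle `a → b → c → a`. -/
def c3 (a b c : α) : Perm α := Equiv.swap a c * Equiv.swap a b

variable {a b c : α}

lemma c3_a (hab : a ≠ b) (hbc : b ≠ c) : c3 a b c a = b := by
  simp only [c3, Perm.mul_apply, Equiv.swap_apply_left]
  exact Equiv.swap_apply_of_ne_of_ne hab.symm hbc

lemma c3_b (hab : a ≠ b) (hac : a ≠ c) : c3 a b c b = c := by
  simp only [c3, Perm.mul_apply]
  rw [Equiv.swap_apply_right, Equiv.swap_apply_left]

lemma c3_c (hac : a ≠ c) (hbc : b ≠ c) : c3 a b c c = a := by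
  simp only [c3, Perm.mul_apply]
  rw [Equiv.swap_apply_of_ne_of_ne hac.symm hbc.symm, Equiv.swap_apply_right]

lemma c3_other {x : α} (hxa : x ≠ a) (hxb : x ≠ b) (hxc : x ≠ c) : c3 a b c x = x := by
  simp only [c3, Perm.mul_apply]
  rw [Equiv.swap_apply_of_ne_of_ne hxa hxb, Equiv.swap_apply_of_ne_of_ne hxa hxc]

lemma c3_inv : (c3 a b c)⁻¹ = c3 a c b := by
  simp [c3, mul_inv_rev]

lemma c3_isThreeCycle (hab : a ≠ b) (hac : a ≠ c) (hbc : b ≠ c) : IsThreeCycle (c3 a b c) :=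
  isThreeCycle_swap_mul_swap_same hac hab (fun h => hbc h.symm)

lemma c3_mem_alternating (hab : a ≠ b) (hac : a ≠ c) (hbc : b ≠ c) :
    c3 a b c ∈ alternatingGroup α :=
  (c3_isThreeCycle hab hac hbc).mem_alternatingGroup

lemma c3_conj (σ : Perm α) : σ * c3 a b c * σ⁻¹ = c3 (σ a) (σ b) (σ c) := by
  show σ * (Equiv.swap a c * Equiv.swap a b) * σ⁻¹ = Equiv.swap (σ a) (σ c) * Equiv.swap (σ a) (σ b)
  rw [Equiv.swap_apply_apply, Equiv.swap_apply_apply]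
  group

set_option linter.unusedSectionVars false

lemma eq_c3_of_support {f : Perm α} {x y z : α} (hxy : x ≠ y) (hxz : x ≠ z) (hyz : y ≠ z)
    (hsupp : f.support = {x, y, z}) (hfx : f x = y) : f = c3 x y z := by
  have hmem : ∀ w : α, w ∈ f.support ↔ (w = x ∨ w = y ∨ w = z) := by
    intro w
    rw [hsupp]
    simp
  have hy : y ∈ f.support := (hmem y).mpr (Or.inr (Or.inl rfl))
  have hz : z ∈ f.support := (hmem z).mpr (Or.inr (Or.inr rfl))
  have hfy : f y = z := by
    have h1 : f y ∈ f.support := apply_mem_support.mpr hy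
    have h2 := (hmem (f y)).mp h1
    have hne : f y ≠ y := mem_support.mp hy
    rcases h2 with h | h | h
    · -- f y = x : then f z = z, contradiction
      exfalso
      have h1z : f z ∈ f.support := apply_mem_support.mpr hz
      have h2z := (hmem (f z)).mp h1z
      have hnez : f z ≠ z := mem_support.mp hz
      rcases h2z with h' | h' | h'
      · exact hyz (f.injective (h.trans h'.symm)) 
      · exact hxz (f.injective (hfx.trans h'.symm))
      · exact hnez h'
    · exact absurd (f.injective (hfx.trans h.symm)) hxy
    · exact h
  have hfz : f z = x := by
    have h1 : f z ∈ f.support := apply_mem_support.mpr hz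
    have h2 := (hmem (f z)).mp h1
    have hne : f z ≠ z := mem_support.mp hz
    rcases h2 with h | h | h
    · exact h
    · exact absurd (f.injective (h.trans hfx.symm)) (fun h' => hxz h'.symm)
    · exact absurd h hne
  apply Equiv.ext
  intro p
  by_cases hpx : p = x
  · subst hpx; rw [hfx, c3_a hxy hyz]
  by_cases hpy : p = y
  · subst hpy; rw [hfy, c3_b hxy hxz]
  by_cases hpz : p = z
  · subst hpz; rw [hfz, c3_c hxz hyz]
  rw [notMem_support.mp (fun hmem' => by
      rcases (hmem p).mp hmem' with h | h | h
      exacts [hpx h, hpy h, hpz h]), c3_other hpx hpy hpz]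

lemma isThreeCycle_exists_c3 {f : Perm α} (hf : IsThreeCycle f) :
    ∃ x y z : α, x ≠ y ∧ x ≠ z ∧ y ≠ z ∧ f = c3 x y z := by
  obtain ⟨x, y, z, hxy, hxz, hyz, hsupp⟩ := Finset.card_eq_three.mp hf.card_support
  have hx : x ∈ f.support := by rw [hsupp]; simp
  have hfx : f x ∈ f.support := apply_mem_support.mpr hx
  rw [hsupp] at hfx
  simp only [Finset.mem_insert, Finset.mem_singleton] at hfx
  rcases hfx with h | h | h
  · exact absurd h (mem_support.mp hx)
  · exact ⟨x, y, z, hxy, hxz, hyz, eq_c3_of_support hxy hxz hyz hsupp h⟩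
  · refine ⟨x, z, y, hxz, hxy, fun h' => hyz h'.symm, eq_c3_of_support hxz hxy
      (fun h' => hyz h'.symm) ?_ h⟩
    rw [hsupp]
    apply Finset.ext
    intro w
    simp only [Finset.mem_insert, Finset.mem_singleton]
    tauto

lemma mul4_apply (τ σ : Perm α) (x : α) :
    (τ * σ * τ⁻¹ * σ⁻¹) x = τ (σ (τ⁻¹ (σ⁻¹ x))) := by
  simp [Perm.mul_apply]

lemma inv_ne (σ : Perm α) {x y z : α} (hyz : σ y = z) (hxz : x ≠ z) : σ⁻¹ x ≠ y := by
  intro h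
  apply hxz
  have h2 := congrArg σ h
  rwa [Perm.apply_inv_self, hyz] at h2

lemma inv_eq (σ : Perm α) {y z : α} (hyz : σ y = z) : σ⁻¹ z = y := by
  rw [← hyz]; exact Perm.inv_apply_self σ y

/-- Key computation 1: commutator of a 3-cycle along an orbit chain with σ is a 3-cycle. -/
lemma key1 {σ : Perm α} {a1 a2 a3 a4 : α}
    (e2 : σ a1 = a2) (e3 : σ a2 = a3) (e4 : σ a3 = a4)
    (h12 : a1 ≠ a2) (h13 : a1 ≠ a3) (h14 : a1 ≠ a4)
    (h23 : a2 ≠ a3) (h24 : a2 ≠ a4) (h34 : a3 ≠ a4) :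
    c3 a1 a2 a3 * σ * (c3 a1 a2 a3)⁻¹ * σ⁻¹ = c3 a1 a2 a4 := by
  apply Equiv.ext
  intro x
  rw [mul4_apply, c3_inv]
  by_cases hx1 : x = a1
  · rw [hx1]
    rw [c3_other (inv_ne σ e2 h12) (inv_ne σ e4 h14) (inv_ne σ e3 h13),
      Perm.apply_inv_self, c3_a h12 h23, c3_a h12 h24]
  by_cases hx2 : x = a2
  · rw [hx2, inv_eq σ e2, c3_a h13 h23.symm, e4,
      c3_other h14.symm h24.symm h34.symm, c3_b h12 h14]
  by_cases hx3 : x = a3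
  · rw [hx3, inv_eq σ e3, c3_c h12 h23.symm, e2, c3_b h12 h13,
      c3_other h13.symm h23.symm h34]
  by_cases hx4 : x = a4
  · rw [hx4, inv_eq σ e4, c3_b h13 h12, e3, c3_c h13 h23, c3_c h14 h24]
  · rw [c3_other (inv_ne σ e2 (Ne.symm ?q1)) (inv_ne σ e4 (Ne.symm ?q3)) (inv_ne σ e3 (Ne.symm ?q2)),
      Perm.apply_inv_self, c3_other hx1 hx2 hx3, c3_other hx1 hx2 hx4]
    case q1 => exact fun h => hx2 h.symm
    case q2 => exact fun h => hx3 h.symm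
    case q3 => exact fun h => hx4 h.symm

/-- Key computation 2: with two 2-point orbits, the commutator with a 3-cycle is a
double transposition. -/
lemma key2 {σ : Perm α} {a1 a2 b1 b2 : α}
    (e1 : σ a1 = a2) (e2 : σ a2 = a1) (f1 : σ b1 = b2) (f2 : σ b2 = b1)
    (h12 : a1 ≠ a2) (h1b1 : a1 ≠ b1) (h1b2 : a1 ≠ b2)
    (h2b1 : a2 ≠ b1) (h2b2 : a2 ≠ b2) (hb12 : b1 ≠ b2) :
    c3 a1 a2 b1 * σ * (c3 a1 a2 b1)⁻¹ * σ⁻¹ = Equiv.swap a1 b1 * Equiv.swap a2 b2 := by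
  apply Equiv.ext
  intro x
  rw [mul4_apply, c3_inv, Perm.mul_apply]
  by_cases hx1 : x = a1
  · rw [hx1, inv_eq σ e2, c3_c h12 h2b1.symm, e1, c3_b h12 h1b1,
      Equiv.swap_apply_of_ne_of_ne h12 h1b2, Equiv.swap_apply_left]
  by_cases hx2 : x = a2
  · rw [hx2, inv_eq σ e1, c3_a h1b1 h2b1.symm, f1, c3_other h1b2.symm h2b2.symm hb12.symm,
      Equiv.swap_apply_left, Equiv.swap_apply_of_ne_of_ne h1b2.symm hb12.symm]
  by_cases hxb1 : x = b1
  · rw [hxb1, inv_eq σ f2, c3_other h1b2.symm hb12.symm h2b2.symm, f2, c3_c h1b1 h2b1,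
      Equiv.swap_apply_of_ne_of_ne h2b1.symm hb12, Equiv.swap_apply_right]
  by_cases hxb2 : x = b2
  · rw [hxb2, inv_eq σ f1, c3_b h1b1 h12, e2, c3_a h12 h2b1,
      Equiv.swap_apply_right, Equiv.swap_apply_of_ne_of_ne h12.symm h2b1]
  · rw [c3_other (inv_ne σ e1 (Ne.symm ?r2)) (inv_ne σ f1 (Ne.symm ?rb2)) (inv_ne σ e2 (Ne.symm ?r1)),
      Perm.apply_inv_self, c3_other hx1 hx2 hxb1,
      Equiv.swap_apply_of_ne_of_ne hx2 hxb2, Equiv.swap_apply_of_ne_of_ne hx1 hxb1]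
    case r1 => exact fun h => hx1 h.symm
    case r2 => exact fun h => hx2 h.symm
    case rb2 => exact fun h => hxb2 h.symm

/-- Key computation 3: commutator of a 3-cycle with a double transposition is a 3-cycle. -/
lemma key3 {a1 b1 a2 b2 e : α}
    (h1b1 : a1 ≠ b1) (h1a2 : a1 ≠ a2) (h1b2 : a1 ≠ b2) (h1e : a1 ≠ e)
    (hb1a2 : b1 ≠ a2) (hb1b2 : b1 ≠ b2) (hb1e : b1 ≠ e)
    (ha2b2 : a2 ≠ b2) (ha2e : a2 ≠ e) (hb2e : b2 ≠ e) :
    c3 a1 b1 e * (Equiv.swap a1 b1 * Equiv.swap a2 b2) * (c3 a1 b1 e)⁻¹ *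
      (Equiv.swap a1 b1 * Equiv.swap a2 b2)⁻¹ = c3 a1 e b1 := by
  set ρ := Equiv.swap a1 b1 * Equiv.swap a2 b2 with hρ
  have hra1 : ρ a1 = b1 := by
    rw [hρ, Perm.mul_apply, Equiv.swap_apply_of_ne_of_ne h1a2 h1b2, Equiv.swap_apply_left]
  have hrb1 : ρ b1 = a1 := by
    rw [hρ, Perm.mul_apply, Equiv.swap_apply_of_ne_of_ne hb1a2 hb1b2, Equiv.swap_apply_right]
  have hra2 : ρ a2 = b2 := by
    rw [hρ, Perm.mul_apply, Equiv.swap_apply_left,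
      Equiv.swap_apply_of_ne_of_ne h1b2.symm hb1b2.symm]
  have hrb2 : ρ b2 = a2 := by
    rw [hρ, Perm.mul_apply, Equiv.swap_apply_right,
      Equiv.swap_apply_of_ne_of_ne h1a2.symm hb1a2.symm]
  have hre : ρ e = e := by
    rw [hρ, Perm.mul_apply, Equiv.swap_apply_of_ne_of_ne ha2e.symm hb2e.symm,
      Equiv.swap_apply_of_ne_of_ne h1e.symm hb1e.symm]
  apply Equiv.ext
  intro x
  rw [mul4_apply, c3_inv]
  by_cases hx1 : x = a1
  · rw [hx1, inv_eq ρ hrb1, c3_c h1b1 hb1e.symm, hra1, c3_b h1b1 h1e, c3_a h1e hb1e.symm]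
  by_cases hxe : x = e
  · rw [hxe, inv_eq ρ hre, c3_b h1e h1b1, hrb1, c3_a h1b1 hb1e]
  by_cases hxb1 : x = b1
  · rw [hxb1, inv_eq ρ hra1, c3_a h1e hb1e.symm, hre, c3_c h1e hb1e, c3_c h1b1 hb1e.symm]
  by_cases hxa2 : x = a2
  · rw [hxa2, inv_eq ρ hrb2, c3_other h1b2.symm hb2e hb1b2.symm, hrb2,
      c3_other h1a2.symm hb1a2.symm ha2e, c3_other h1a2.symm ha2e hb1a2.symm]
  by_cases hxb2 : x = b2
  · rw [hxb2, inv_eq ρ hra2, c3_other h1a2.symm ha2e hb1a2.symm, hra2,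
      c3_other h1b2.symm hb1b2.symm hb2e, c3_other h1b2.symm hb2e hb1b2.symm]
  · have hfix : ρ x = x := by
      rw [hρ, Perm.mul_apply, Equiv.swap_apply_of_ne_of_ne hxa2 hxb2,
        Equiv.swap_apply_of_ne_of_ne hx1 hxb1]
    rw [inv_eq ρ hfix, c3_other hx1 hxe hxb1, hfix, c3_other hx1 hxb1 hxe]

/-- Pointwise values of the commutator when σ has two 3-point orbits. -/
lemma key5 {σ : Perm α} {a1 a2 a3 b1 b2 b3 : α}
    (ea1 : σ a1 = a2) (ea2 : σ a2 = a3) (ea3 : σ a3 = a1)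
    (eb1 : σ b1 = b2) (eb2 : σ b2 = b3) (eb3 : σ b3 = b1)
    (h12 : a1 ≠ a2) (h13 : a1 ≠ a3) (h23 : a2 ≠ a3)
    (k12 : b1 ≠ b2)
    (c11 : a1 ≠ b1) (c12 : a1 ≠ b2)
    (c21 : a2 ≠ b1) (c22 : a2 ≠ b2)
    (c31 : a3 ≠ b1) (c32 : a3 ≠ b2) :
    (c3 a1 a2 b1 * σ * (c3 a1 a2 b1)⁻¹ * σ⁻¹) a1 = a2 ∧
    (c3 a1 a2 b1 * σ * (c3 a1 a2 b1)⁻¹ * σ⁻¹) a2 = b2 ∧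
    (c3 a1 a2 b1 * σ * (c3 a1 a2 b1)⁻¹ * σ⁻¹) b2 = a3 := by
  refine ⟨?_, ?_, ?_⟩
  · rw [mul4_apply, c3_inv, inv_eq σ ea3, c3_other h13.symm c31 h23.symm, ea3,
      c3_a h12 c21]
  · rw [mul4_apply, c3_inv, inv_eq σ ea1, c3_a c11 c21.symm, eb1,
      c3_other c12.symm c22.symm k12.symm]
  · rw [mul4_apply, c3_inv, inv_eq σ eb1, c3_b c11 h12, ea2,
      c3_other h13.symm h23.symm c31]

lemma exists_moved {σ : Perm α} (h : σ ≠ 1) : ∃ a, σ a ≠ a := by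
  by_contra hc
  push_neg at hc
  exact h (Equiv.ext fun x => (hc x).trans (Perm.one_apply x).symm)

lemma step1 (N' : Subgroup (Perm α))
    (hconj : ∀ ξ g : Perm α, ξ ∈ alternatingGroup α → g ∈ N' → ξ * g * ξ⁻¹ ∈ N')
    {σ : Perm α} (hσ : σ ∈ N') {a : α} (h2 : σ (σ a) ≠ a) (h3 : σ (σ (σ a)) ≠ a) :
    ∃ f ∈ N', f.IsThreeCycle := by
  have h1 : σ a ≠ a := fun h => h2 (by rw [h, h])
  have h12 : a ≠ σ a := Ne.symm h1
  have h13 : a ≠ σ (σ a) := Ne.symm h2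
  have h14 : a ≠ σ (σ (σ a)) := Ne.symm h3
  have h23 : σ a ≠ σ (σ a) := fun h => h1 (σ.injective h).symm
  have h24 : σ a ≠ σ (σ (σ a)) := fun h => h2 (σ.injective h).symm
  have h34 : σ (σ a) ≠ σ (σ (σ a)) := fun h => h23 (σ.injective h)
  have hmem : c3 a (σ a) (σ (σ a)) * σ * (c3 a (σ a) (σ (σ a)))⁻¹ * σ⁻¹ ∈ N' :=
    mul_mem (hconj _ σ (c3_mem_alternating h12 h13 h23) hσ) (inv_mem hσ)
  rw [key1 rfl rfl rfl h12 h13 h14 h23 h24 h34] at hmem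
  exact ⟨_, hmem, c3_isThreeCycle h12 h14 h24⟩

lemma step2 (N' : Subgroup (Perm α))
    (hconj : ∀ ξ g : Perm α, ξ ∈ alternatingGroup α → g ∈ N' → ξ * g * ξ⁻¹ ∈ N')
    {σ : Perm α} (hσ : σ ∈ N') (hne : σ ≠ 1) (hcube : ∀ x, σ (σ (σ x)) = x) :
    ∃ f ∈ N', f.IsThreeCycle := by
  obtain ⟨a, ha⟩ := exists_moved hne
  have h12 : a ≠ σ a := Ne.symm ha
  have h13 : a ≠ σ (σ a) := by
    intro h
    apply ha
    have h' := congrArg σ h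
    rw [hcube] at h'
    exact h'
  have h23 : σ a ≠ σ (σ a) := fun h => h12 (σ.injective h)
  by_cases hfix : ∀ x, x ≠ a → x ≠ σ a → x ≠ σ (σ a) → σ x = x
  · refine ⟨σ, hσ, ?_⟩
    have hc3 : σ = c3 a (σ a) (σ (σ a)) := by
      apply Equiv.ext
      intro x
      by_cases hx1 : x = a
      · rw [hx1, c3_a h12 h23]
      by_cases hx2 : x = σ a
      · rw [hx2, c3_b h12 h13]
      by_cases hx3 : x = σ (σ a)
      · rw [hx3, hcube a, c3_c h13 h23]
      · rw [hfix x hx1 hx2 hx3, c3_other hx1 hx2 hx3]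
    rw [hc3]
    exact c3_isThreeCycle h12 h13 h23
  · push_neg at hfix
    obtain ⟨b, hb1, hb2, hb3, hbm⟩ := hfix
    have k12 : b ≠ σ b := Ne.symm hbm
    have c11 : a ≠ b := Ne.symm hb1
    have c21 : σ a ≠ b := Ne.symm hb2
    have c31 : σ (σ a) ≠ b := Ne.symm hb3
    have c12 : a ≠ σ b := by
      intro h
      apply hb3
      rw [h, hcube b]
    have c22 : σ a ≠ σ b := fun h => c11 (σ.injective h)
    have c32 : σ (σ a) ≠ σ b := fun h => c21 (σ.injective h)
    have hmem : c3 a (σ a) b * σ * (c3 a (σ a) b)⁻¹ * σ⁻¹ ∈ N' :=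
      mul_mem (hconj _ σ (c3_mem_alternating h12 c11 c21) hσ) (inv_mem hσ)
    obtain ⟨v1, v2, v3⟩ :=
      key5 (σ := σ) rfl rfl (hcube a) rfl rfl (hcube b) h12 h13 h23 k12 c11 c12 c21 c22 c31 c32
    apply step1 N' hconj hmem (a := a)
    · rw [v1, v2]
      exact Ne.symm c12
    · rw [v1, v2, v3]
      exact Ne.symm h13

lemma step3 (N' : Subgroup (Perm α))
    (hconj : ∀ ξ g : Perm α, ξ ∈ alternatingGroup α → g ∈ N' → ξ * g * ξ⁻¹ ∈ N')
    (hNA : N' ≤ alternatingGroup α) (h5 : 5 ≤ Fintype.card α)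
    {σ : Perm α} (hσ : σ ∈ N') (hne : σ ≠ 1) (hsq : ∀ x, σ (σ x) = x) :
    ∃ f ∈ N', f.IsThreeCycle := by
  obtain ⟨a, ha⟩ := exists_moved hne
  have h12 : a ≠ σ a := Ne.symm ha
  have hb : ∃ b, b ≠ a ∧ b ≠ σ a ∧ σ b ≠ b := by
    by_contra hc
    push_neg at hc
    have hswap : σ = Equiv.swap a (σ a) := by
      apply Equiv.ext
      intro x
      by_cases hx1 : x = a
      · rw [hx1, Equiv.swap_apply_left]
      by_cases hx2 : x = σ a
      · rw [hx2, hsq a, Equiv.swap_apply_right]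
      · rw [hc x hx1 hx2, Equiv.swap_apply_of_ne_of_ne hx1 hx2]
    have hsign := hNA hσ
    rw [mem_alternatingGroup, hswap, sign_swap h12] at hsign
    exact (by decide : ¬((-1 : ℤˣ) = 1)) hsign
  obtain ⟨b, hba, hba2, hbm⟩ := hb
  have k12 : b ≠ σ b := Ne.symm hbm
  have c11 : a ≠ b := Ne.symm hba
  have c21 : σ a ≠ b := Ne.symm hba2
  have c12 : a ≠ σ b := by
    intro h
    apply c21
    rw [h, hsq b]
  have c22 : σ a ≠ σ b := fun h => c11 (σ.injective h)
  have hcard : ∃ e, e ∉ ({a, σ a, b, σ b} : Finset α) := by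
    by_contra hc
    push_neg at hc
    have hsub : (Finset.univ : Finset α) ⊆ {a, σ a, b, σ b} := fun x _ => hc x
    have hle := Finset.card_le_card hsub
    rw [Finset.card_univ] at hle
    have h4 : ({a, σ a, b, σ b} : Finset α).card ≤ 4 := by
      calc ({a, σ a, b, σ b} : Finset α).card
          ≤ ({σ a, b, σ b} : Finset α).card + 1 := Finset.card_insert_le _ _
        _ ≤ (({b, σ b} : Finset α).card + 1) + 1 :=
            Nat.add_le_add_right (Finset.card_insert_le _ _) 1
        _ ≤ ((({σ b} : Finset α).card + 1) + 1) + 1 :=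
            Nat.add_le_add_right (Nat.add_le_add_right (Finset.card_insert_le _ _) 1) 1
        _ = 4 := by rw [Finset.card_singleton]
    omega
  obtain ⟨e, he⟩ := hcard
  simp only [Finset.mem_insert, Finset.mem_singleton, not_or] at he
  obtain ⟨he1, he2, he3, he4⟩ := he
  have hρmem : c3 a (σ a) b * σ * (c3 a (σ a) b)⁻¹ * σ⁻¹ ∈ N' :=
    mul_mem (hconj _ σ (c3_mem_alternating h12 c11 c21) hσ) (inv_mem hσ)
  rw [key2 rfl (hsq a) rfl (hsq b) h12 c11 c12 c21 c22 k12] at hρmem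
  have hfinal : c3 a b e * (Equiv.swap a b * Equiv.swap (σ a) (σ b)) * (c3 a b e)⁻¹ *
      (Equiv.swap a b * Equiv.swap (σ a) (σ b))⁻¹ ∈ N' :=
    mul_mem (hconj _ _ (c3_mem_alternating c11 (Ne.symm he1) (Ne.symm he3)) hρmem)
      (inv_mem hρmem)
  rw [key3 c11 h12 c12 (Ne.symm he1) (Ne.symm c21) k12 (Ne.symm he3) c22 (Ne.symm he2)
    (Ne.symm he4)] at hfinal
  exact ⟨_, hfinal, c3_isThreeCycle (Ne.symm he1) c11 he3⟩

lemma exists_threeCycle (N' : Subgroup (Perm α)) (hNA : N' ≤ alternatingGroup α)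
    (hconj : ∀ ξ g : Perm α, ξ ∈ alternatingGroup α → g ∈ N' → ξ * g * ξ⁻¹ ∈ N')
    (h5 : 5 ≤ Fintype.card α) {g : Perm α} (hg : g ∈ N') (hg1 : g ≠ 1) :
    ∃ f ∈ N', f.IsThreeCycle := by
  by_cases hA : ∃ a, g (g a) ≠ a ∧ g (g (g a)) ≠ a
  · obtain ⟨a, h2, h3⟩ := hA
    exact step1 N' hconj hg h2 h3
  push_neg at hA
  by_cases hB : ∃ a, g (g a) ≠ a
  · obtain ⟨a, ha⟩ := hB
    have hδ : g * g ∈ N' := mul_mem hg hg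
    have hδne : g * g ≠ 1 := by
      intro h
      apply ha
      have h' := congrArg (fun p : Perm α => p a) h
      simpa using h'
    have hδcube : ∀ x, (g * g) ((g * g) ((g * g) x)) = x := by
      intro x
      simp only [Perm.mul_apply]
      by_cases hx : g (g x) = x
      · rw [hx, hx, hx]
      · have h3x := hA x hx
        rw [h3x, h3x]
    exact step2 N' hconj hδ hδne hδcube
  · push_neg at hB
    exact step3 N' hconj hNA h5 hg hg1 hB

theorem isSimpleGroup_alternating (h5 : 5 ≤ Fintype.card α) :
    IsSimpleGroup ↥(alternatingGroup α) := by
  have hnt : Nontrivial ↥(alternatingGroup α) :=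
    alternatingGroup.nontrivial_of_three_le_card (by rw [Nat.card_eq_fintype_card]; omega)
  refine { toNontrivial := hnt, eq_bot_or_eq_top_of_normal := ?_ }
  intro H hH
  rcases eq_or_ne H ⊥ with hb | hb
  · exact Or.inl hb
  right
  obtain ⟨x, hxH, hx1⟩ : ∃ x, x ∈ H ∧ x ≠ 1 := by
    by_contra hc
    push_neg at hc
    apply hb
    rw [Subgroup.eq_bot_iff_forall]
    exact hc
  set N' : Subgroup (Perm α) := Subgroup.map (alternatingGroup α).subtype H with hN'
  have hNA : N' ≤ alternatingGroup α := by
    intro g hg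
    rcases Subgroup.mem_map.mp hg with ⟨y, _, rfl⟩
    exact y.2
  have hconj : ∀ ξ g : Perm α, ξ ∈ alternatingGroup α → g ∈ N' → ξ * g * ξ⁻¹ ∈ N' := by
    intro ξ g hξ hg
    rcases Subgroup.mem_map.mp hg with ⟨y, hy, rfl⟩
    exact Subgroup.mem_map.mpr ⟨⟨ξ, hξ⟩ * y * ⟨ξ, hξ⟩⁻¹, hH.conj_mem y hy ⟨ξ, hξ⟩, rfl⟩
  have hgN : ((x : ↥(alternatingGroup α)) : Perm α) ∈ N' := Subgroup.mem_map_of_mem _ hxH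
  have hgne : ((x : ↥(alternatingGroup α)) : Perm α) ≠ 1 := by
    intro h
    exact hx1 (Subtype.ext h)
  obtain ⟨f, hfN, hf3⟩ := exists_threeCycle N' hNA hconj h5 hgN hgne
  rcases Subgroup.mem_map.mp hfN with ⟨y, hyH, hyf⟩
  have hfA : (⟨f, hf3.mem_alternatingGroup⟩ : ↥(alternatingGroup α)) ∈ H := by
    have hy : y = ⟨f, hf3.mem_alternatingGroup⟩ := Subtype.ext hyf
    rwa [hy] at hyH
  haveI := hH
  rw [eq_top_iff, ← hf3.alternating_normalClosure (by rwa [Nat.card_eq_fintype_card])]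
  exact Subgroup.normalClosure_le_normal
    (by rwa [Set.singleton_subset_iff, SetLike.mem_coe])

end AltSimple
namespace Stmt10

open Equiv Equiv.Perm Subgroup AltSimple

variable {J : Type*} [Group J] {n : ℕ}

lemma Rub_le : RubikGroup J n ≤ EquivariantPerm J n := by
  rw [RubikGroup, Subgroup.commutator_le]
  intro g hg h hh
  rw [commutatorElement_def]
  exact mul_mem (mul_mem (mul_mem hg hh) (inv_mem hg)) (inv_mem hh)

/-- commutator subgroup of Perm (Fin n) is inside the alternating group -/
lemma commutator_perm_le :
    (⁅(⊤ : Subgroup (Perm (Fin n))), ⊤⁆ : Subgroup (Perm (Fin n))) ≤ alternatingGroup (Fin n) := by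
  rw [Subgroup.commutator_le]
  intro g _ h _
  rw [mem_alternatingGroup, map_commutatorElement]
  exact commutatorElement_eq_one_iff_mul_comm.mpr (mul_comm _ _)

lemma c3_eq_commutator {x y z : Fin n} (hxy : x ≠ y) (hxz : x ≠ z) (hyz : y ≠ z) :
    c3 x y z = ⁅Equiv.swap x y, Equiv.swap x z⁆ := by
  apply Equiv.ext
  intro p
  rw [commutatorElement_def, Equiv.swap_inv, Equiv.swap_inv]
  simp only [Perm.mul_apply]
  by_cases hp1 : p = x
  · rw [hp1, c3_a hxy hyz, Equiv.swap_apply_left, Equiv.swap_apply_of_ne_of_ne hxz.symm hyz.symm,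
      Equiv.swap_apply_right, Equiv.swap_apply_left]
  by_cases hp2 : p = y
  · rw [hp2, c3_b hxy hxz, Equiv.swap_apply_of_ne_of_ne hxy.symm hyz,
      Equiv.swap_apply_right, Equiv.swap_apply_left,
      Equiv.swap_apply_of_ne_of_ne hxz.symm hyz.symm]
  by_cases hp3 : p = z
  · rw [hp3, c3_c hxz hyz, Equiv.swap_apply_right, Equiv.swap_apply_left,
      Equiv.swap_apply_of_ne_of_ne hxy.symm hyz, Equiv.swap_apply_right]
  · rw [c3_other hp1 hp2 hp3, Equiv.swap_apply_of_ne_of_ne hp1 hp3,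
      Equiv.swap_apply_of_ne_of_ne hp1 hp2, Equiv.swap_apply_of_ne_of_ne hp1 hp3,
      Equiv.swap_apply_of_ne_of_ne hp1 hp2]

lemma map_toPHom_RE : Subgroup.map toPHom (RE J n) = alternatingGroup (Fin n) := by
  apply le_antisymm
  · rw [RE, Subgroup.map_commutator]
    exact le_trans (Subgroup.commutator_mono le_top le_top) commutator_perm_le
  · rw [← closure_three_cycles_eq_alternating, Subgroup.closure_le]
    intro f hf
    obtain ⟨x, y, z, hxy, hxz, hyz, rfl⟩ := isThreeCycle_exists_c3 hf
    rw [SetLike.mem_coe, c3_eq_commutator hxy hxz hyz]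
    refine Subgroup.mem_map.mpr
      ⟨⁅em (fun _ => (1:J)) (Equiv.swap x y), em (fun _ => (1:J)) (Equiv.swap x z)⁆,
        Subgroup.commutator_mem_commutator (Subgroup.mem_top _) (Subgroup.mem_top _), ?_⟩
    rw [map_commutatorElement, toP_em, toP_em]


lemma commEl_mem (g h : J) : ⁅g, h⁆ ∈ commutator J := by
  rw [_root_.commutator_def]
  exact Subgroup.commutator_mem_commutator (Subgroup.mem_top _) (Subgroup.mem_top _)

lemma sv_self (i : Fin n) (t : J) : sv i t i = t := if_pos rfl

lemma sv_other {i m : Fin n} (h : m ≠ i) (t : J) : sv i t m = 1 := if_neg h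

lemma dv_i {i k : Fin n} (hik : i ≠ k) (t : J) : dv i k t i = t := if_pos rfl

lemma dv_k {i k : Fin n} (hik : i ≠ k) (t : J) : dv i k t k = t⁻¹ := by
  rw [dv, if_neg (fun h : k = i => hik h.symm), if_pos rfl]

lemma dv_other {i k m : Fin n} (hmi : m ≠ i) (hmk : m ≠ k) (t : J) : dv i k t m = 1 := by
  rw [dv, if_neg hmi, if_neg hmk]

/-- I1: conjugation of a single-coordinate element. -/
lemma conj_se (w : Fin n → J) (τ : Perm (Fin n)) (i : Fin n) (u : J) :
    em w τ * se i u * (em w τ)⁻¹ = se (τ i) ((w i)⁻¹ * u * w i) := by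
  rw [se, se, conj_emb]
  congr 1
  funext m
  by_cases h : m = τ i
  · rw [h, Perm.inv_apply_self, sv_self, sv_self]
  · have h' : τ⁻¹ m ≠ i := by
      intro hc
      apply h
      rw [← hc, Perm.apply_inv_self]
    rw [sv_other h', sv_other h]
    group

/-- I2: conjugation of a two-coordinate element. -/
lemma conj_dd (w : Fin n → J) (τ : Perm (Fin n)) {i k : Fin n} (hik : i ≠ k) (t : J) :
    em w τ * dd i k t * (em w τ)⁻¹ =
      dd (τ i) (τ k) ((w i)⁻¹ * t * w i) *
        se (τ k) (((w k)⁻¹ * t⁻¹ * w k) * ((w i)⁻¹ * t * w i)) := by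
  have hik' : τ i ≠ τ k := fun hc => hik (τ.injective hc)
  rw [dd, conj_emb, dd, se, emb_mul]
  congr 1
  funext m
  by_cases h1 : m = τ i
  · rw [h1, Perm.inv_apply_self, dv_i hik, sv_other hik', dv_i hik', one_mul]
  by_cases h2 : m = τ k
  · rw [h2, Perm.inv_apply_self, dv_k hik, sv_self, dv_k hik']
    group
  · have h'1 : τ⁻¹ m ≠ i := by
      intro hc; apply h1; rw [← hc, Perm.apply_inv_self]
    have h'2 : τ⁻¹ m ≠ k := by
      intro hc; apply h2; rw [← hc, Perm.apply_inv_self]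
    rw [dv_other h'1 h'2, sv_other h2, dv_other h1 h2]
    group

/-- I3 -/
lemma dd_mul_dd {i k l : Fin n} (hik : i ≠ k) (hil : i ≠ l) (hkl : k ≠ l) (t : J) :
    dd i k t * dd k l t = dd i l t := by
  rw [dd, dd, dd, emb_mul]
  congr 1
  funext m
  by_cases h1 : m = i
  · rw [h1, dv_other (fun h : i = k => hik h) (fun h : i = l => hil h), dv_i hik, dv_i hil,
      one_mul]
  by_cases h2 : m = k
  · rw [h2, dv_i hkl, dv_k hik, dv_other (fun h : k = i => hik h.symm) hkl, mul_inv_cancel]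
  by_cases h3 : m = l
  · rw [h3, dv_k hkl, dv_other (fun h : l = i => hil h.symm) (fun h : l = k => hkl h.symm),
      dv_k hil, mul_one]
  · rw [dv_other h2 h3, dv_other h1 h2, dv_other h1 h3, mul_one]

/-- I5 -/
lemma dd_diff {i k : Fin n} (hik : i ≠ k) (x y : J) :
    dd i k x * (dd i k y)⁻¹ = se i (y⁻¹ * x) * se k (y * x⁻¹) := by
  rw [dd, dd, emb_inv, emb_mul, se, se, emb_mul]
  congr 1
  funext m
  by_cases h1 : m = i
  · rw [h1, dv_i hik, dv_i hik, sv_other hik, sv_self, one_mul]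
  by_cases h2 : m = k
  · rw [h2, dv_k hik, dv_k hik, sv_self, sv_other (fun h : k = i => hik h.symm)]
    group
  · rw [dv_other h1 h2, dv_other h1 h2, sv_other h2, sv_other h1]
    group

/-- I6 -/
lemma emb_comm (v v' : Fin n → J) (h : ∀ m, v m = 1 ∨ v' m = 1) :
    em v 1 * em v' 1 = em v' 1 * em v 1 := by
  rw [emb_mul, emb_mul]
  congr 1
  funext m
  rcases h m with h' | h' <;> rw [h'] <;> simp

/-- I7 -/
lemma comm_dd_dd {i k l : Fin n} (hik : i ≠ k) (hil : i ≠ l) (hkl : k ≠ l) (a b : J) :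
    ⁅dd i k a, dd i l b⁆ = se i ⁅b⁻¹, a⁻¹⁆ := by
  rw [commutatorElement_def, dd, dd, emb_inv, emb_inv, emb_mul, emb_mul, emb_mul, se]
  congr 1
  funext m
  by_cases h1 : m = i
  · rw [h1, dv_i hik, dv_i hil, sv_self, commutatorElement_def]
    group
  by_cases h2 : m = k
  · rw [h2, dv_k hik, dv_other (fun h : k = i => hik h.symm) hkl,
      sv_other (fun h : k = i => hik h.symm)]
    group
  by_cases h3 : m = l
  · rw [h3, dv_k hil,
      dv_other (fun h : l = i => hil h.symm) (fun h : l = k => hkl h.symm),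
      sv_other (fun h : l = i => hil h.symm)]
    group
  · rw [dv_other h1 h3, dv_other h1 h2, sv_other h1]
    group

section Points

open Equiv Equiv.Perm AltSimple

variable {α : Type*} [DecidableEq α] [Fintype α]

lemma exists_third (h : 3 ≤ Fintype.card α) (i k : α) : ∃ l, l ≠ i ∧ l ≠ k := by
  by_contra hc
  push_neg at hc
  have hsub : (Finset.univ : Finset α) ⊆ {i, k} := by
    intro x _
    rcases eq_or_ne x i with rfl | hxi
    · simp
    · simp [hc x hxi]
  have hle := Finset.card_le_card hsub
  rw [Finset.card_univ] at hle
  have : ({i, k} : Finset α).card ≤ 2 := by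
    calc ({i, k} : Finset α).card ≤ ({k} : Finset α).card + 1 := Finset.card_insert_le _ _
      _ = 2 := by rw [Finset.card_singleton]
  omega

lemma exists_fourth (h : 4 ≤ Fintype.card α) (i k j : α) :
    ∃ l, l ≠ i ∧ l ≠ k ∧ l ≠ j := by
  by_contra hc
  push_neg at hc
  have hsub : (Finset.univ : Finset α) ⊆ {i, k, j} := by
    intro x _
    rcases eq_or_ne x i with rfl | hxi
    · simp
    rcases eq_or_ne x k with rfl | hxk
    · simp
    · simp [hc x hxi hxk]
  have hle := Finset.card_le_card hsub
  rw [Finset.card_univ] at hle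
  have : ({i, k, j} : Finset α).card ≤ 3 := by
    calc ({i, k, j} : Finset α).card ≤ ({k, j} : Finset α).card + 1 := Finset.card_insert_le _ _
      _ ≤ (({j} : Finset α).card + 1) + 1 := Nat.add_le_add_right (Finset.card_insert_le _ _) 1
      _ = 3 := by rw [Finset.card_singleton]
  omega

lemma exists_pair_outside (h : 5 ≤ Fintype.card α) (i k : α) :
    ∃ c d : α, c ≠ d ∧ c ≠ i ∧ c ≠ k ∧ d ≠ i ∧ d ≠ k := by
  obtain ⟨c, hci, hck⟩ := exists_third (by omega) i k
  obtain ⟨d, hdc, hdi, hdk⟩ := exists_fourth (by omega) c i k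
  exact ⟨c, d, fun hcd => hdc hcd.symm, hci, hck, hdi, hdk⟩

lemma exists_alt_map (h5 : 5 ≤ Fintype.card α) {i k i' k' : α} (hik : i ≠ k)
    (hik' : i' ≠ k') :
    ∃ τ : Perm α, τ ∈ alternatingGroup α ∧ τ i = i' ∧ τ k = k' := by
  set ρ0 := Equiv.swap i i' with hρ0
  have hρ0i : ρ0 i = i' := Equiv.swap_apply_left i i'
  set k0 := ρ0 k with hk0def
  have hk0 : k0 ≠ i' := by
    rw [hk0def, ← hρ0i]
    exact fun h => hik (ρ0.injective h).symm
  set ρ1 := Equiv.swap k0 k' with hρ1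
  set τ0 := ρ1 * ρ0 with hτ0
  have hτ0i : τ0 i = i' := by
    rw [hτ0, Perm.mul_apply, hρ0i, hρ1, Equiv.swap_apply_of_ne_of_ne hk0.symm hik']
  have hτ0k : τ0 k = k' := by
    rw [hτ0, Perm.mul_apply, ← hk0def, hρ1, Equiv.swap_apply_left]
  rcases Int.units_eq_one_or (Perm.sign τ0) with hs | hs
  · exact ⟨τ0, mem_alternatingGroup.mpr hs, hτ0i, hτ0k⟩
  · obtain ⟨c, d, hcd, hci, hck, hdi, hdk⟩ := exists_pair_outside h5 i k
    refine ⟨τ0 * Equiv.swap c d, ?_, ?_, ?_⟩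
    · rw [mem_alternatingGroup, map_mul, hs, sign_swap hcd]
      decide
    · rw [Perm.mul_apply, Equiv.swap_apply_of_ne_of_ne hci.symm hdi.symm, hτ0i]
    · rw [Perm.mul_apply, Equiv.swap_apply_of_ne_of_ne hck.symm hdk.symm, hτ0k]

end Points

section Psi

open Equiv Equiv.Perm Subgroup AltSimple

variable {J : Type*} [Group J] {n : ℕ} {Q : Type*} [Group Q]
variable (ψ : ↥(RE J n) →* Q)

/-- abbreviation for the "kernel-moves" hypothesis -/
def KerMoves : Prop :=
  ∀ τ : Perm (Fin n), τ ∈ alternatingGroup (Fin n) →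
    ∃ m : ↥(RE J n), ψ m = 1 ∧ toPHom (m : ↥(EquivariantPerm J n)) = τ

lemma psi_conj (m x : ↥(RE J n)) (hm : ψ m = 1) : ψ (m * x * m⁻¹) = ψ x := by
  rw [map_mul, map_mul, map_inv, hm, one_mul, inv_one, mul_one]

lemma card3 (hn : 5 ≤ n) : 3 ≤ Fintype.card (Fin n) := by rw [Fintype.card_fin]; omega
lemma card4 (hn : 5 ≤ n) : 4 ≤ Fintype.card (Fin n) := by rw [Fintype.card_fin]; omega
lemma card5 (hn : 5 ≤ n) : 5 ≤ Fintype.card (Fin n) := by rw [Fintype.card_fin]; omega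

lemma psi_se_move (hn : 5 ≤ n) (hmv : KerMoves ψ) (i k : Fin n) {u : J}
    (hu : u ∈ commutator J) :
    ∃ (u' : J) (hu' : u' ∈ commutator J),
      ψ ⟨se k u', se_mem k hu'⟩ = ψ ⟨se i u, se_mem i hu⟩ := by
  rcases eq_or_ne i k with rfl | hik
  · exact ⟨u, hu, rfl⟩
  obtain ⟨l, hli, hlk⟩ := exists_third (card3 hn) i k
  set τ := c3 i k l with hτdef
  have hτA : τ ∈ alternatingGroup (Fin n) :=
    c3_mem_alternating hik (Ne.symm hli) (Ne.symm hlk)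
  obtain ⟨m, hm1, hm2⟩ := hmv τ hτA
  set w := bv (m : ↥(EquivariantPerm J n)) with hwdef
  have hm3 : (m : ↥(EquivariantPerm J n)) = em w τ := by
    rw [← hm2, hwdef]
    exact eq_em _
  set u' := (w i)⁻¹ * u * w i with hu'def
  have hu' : u' ∈ commutator J := by
    have := (Subgroup.Normal.conj_mem inferInstance u hu (w i)⁻¹)
    rwa [inv_inv] at this
  refine ⟨u', hu', ?_⟩
  have hconj := psi_conj ψ m ⟨se i u, se_mem i hu⟩ hm1
  rw [← hconj]
  congr 1
  apply Subtype.ext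
  show se k u' = (m : ↥(EquivariantPerm J n)) * se i u * (m : ↥(EquivariantPerm J n))⁻¹
  rw [hm3, conj_se]
  have : τ i = k := c3_a hik (Ne.symm hlk)
  rw [this]

lemma psi_se_comm (hn : 5 ≤ n) (hmv : KerMoves ψ) (i : Fin n) {u : J} (hu : u ∈ commutator J)
    (j : Fin n) {v : J} (hv : v ∈ commutator J) :
    Commute (ψ ⟨se i u, se_mem i hu⟩) (ψ ⟨se j v, se_mem j hv⟩) := by
  obtain ⟨k, hki, hkj⟩ := exists_third (card3 hn) i j
  obtain ⟨v', hv', hmove⟩ := psi_se_move ψ hn hmv j k hv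
  rw [← hmove]
  show _ * _ = _ * _
  rw [← map_mul, ← map_mul]
  congr 1
  apply Subtype.ext
  show se i u * se k v' = se k v' * se i u
  rw [se, se]
  apply emb_comm
  intro m
  by_cases hm : m = i
  · right
    rw [hm]
    exact sv_other hki.symm v'
  · left
    exact sv_other hm u

lemma psi_dd_se_comm (hn : 5 ≤ n) (hmv : KerMoves ψ) {i k : Fin n} (hik : i ≠ k) (t : J)
    (j : Fin n) {u : J} (hu : u ∈ commutator J) :
    Commute (ψ ⟨dd i k t, dd_mem i k hik t⟩) (ψ ⟨se j u, se_mem j hu⟩) := by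
  obtain ⟨l, hli, hlk, hlj⟩ := exists_fourth (card4 hn) i k j
  obtain ⟨u', hu', hmove⟩ := psi_se_move ψ hn hmv j l hu
  rw [← hmove]
  show _ * _ = _ * _
  rw [← map_mul, ← map_mul]
  congr 1
  apply Subtype.ext
  show dd i k t * se l u' = se l u' * dd i k t
  rw [se, dd]
  apply emb_comm
  intro m
  by_cases hm : m = l
  · left
    rw [hm]
    exact dv_other hli hlk t
  · right
    exact sv_other hm u'

/-- decomposition of the image of `dd` after conjugating by a kernel element over `τ`. -/
lemma psi_dd_decomp (hn : 5 ≤ n) (hmv : KerMoves ψ) {i k : Fin n} (hik : i ≠ k) (t : J)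
    {τ : Perm (Fin n)} (hτ : τ ∈ alternatingGroup (Fin n)) :
    ∃ (c1 c2 c3 : J) (hc1 : c1 ∈ commutator J) (hc2 : c2 ∈ commutator J)
      (hc3 : c3 ∈ commutator J),
      ψ ⟨dd i k t, dd_mem i k hik t⟩ =
        ψ ⟨se (τ i) c1, se_mem (τ i) hc1⟩ * ψ ⟨se (τ k) c2, se_mem (τ k) hc2⟩ *
          ψ ⟨dd (τ i) (τ k) t, dd_mem (τ i) (τ k) (fun h => hik (τ.injective h)) t⟩ *
          ψ ⟨se (τ k) c3, se_mem (τ k) hc3⟩ := by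
  have hik' : τ i ≠ τ k := fun h => hik (τ.injective h)
  obtain ⟨m, hm1, hm2⟩ := hmv τ hτ
  set w := bv (m : ↥(EquivariantPerm J n)) with hwdef
  have hm3 : (m : ↥(EquivariantPerm J n)) = em w τ := by
    rw [← hm2, hwdef]
    exact eq_em _
  set x := (w i)⁻¹ * t * w i with hxdef
  set c1 := t⁻¹ * x with hc1def
  set c2 := t * x⁻¹ with hc2def
  set c3 := ((w k)⁻¹ * t⁻¹ * w k) * x with hc3def
  have hc1 : c1 ∈ commutator J := by
    have : c1 = ⁅t⁻¹, (w i)⁻¹⁆ := by rw [hc1def, hxdef, commutatorElement_def]; group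
    rw [this]; exact commEl_mem _ _
  have hc2 : c2 ∈ commutator J := by
    have : c2 = ⁅t, (w i)⁻¹⁆ := by rw [hc2def, hxdef, commutatorElement_def]; group
    rw [this]; exact commEl_mem _ _
  have hc3 : c3 ∈ commutator J := by
    have : c3 = ⁅(w k)⁻¹, t⁻¹⁆ * ⁅t⁻¹, (w i)⁻¹⁆ := by
      rw [hc3def, hxdef, commutatorElement_def, commutatorElement_def]; group
    rw [this]; exact mul_mem (commEl_mem _ _) (commEl_mem _ _)
  refine ⟨c1, c2, c3, hc1, hc2, hc3, ?_⟩
  -- dd (τ i) (τ k) x = se (τ i) c1 * se (τ k) c2 * dd (τ i) (τ k) t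
  have hdx : dd (τ i) (τ k) x =
      se (τ i) c1 * se (τ k) c2 * dd (τ i) (τ k) t := by
    have h5 := dd_diff hik' x t
    rw [hc1def, hc2def]
    calc dd (τ i) (τ k) x = dd (τ i) (τ k) x * (dd (τ i) (τ k) t)⁻¹ * dd (τ i) (τ k) t := by
          group
      _ = se (τ i) (t⁻¹ * x) * se (τ k) (t * x⁻¹) * dd (τ i) (τ k) t := by rw [h5]
  -- conjugation computation
  have hkey : (m : ↥(EquivariantPerm J n)) * dd i k t * (m : ↥(EquivariantPerm J n))⁻¹ =
      se (τ i) c1 * se (τ k) c2 * dd (τ i) (τ k) t * se (τ k) c3 := by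
    rw [hm3, conj_dd w τ hik t, ← hxdef, ← hc3def, ← hdx]
  have hconj := psi_conj ψ m ⟨dd i k t, dd_mem i k hik t⟩ hm1
  calc ψ ⟨dd i k t, dd_mem i k hik t⟩
      = ψ (m * ⟨dd i k t, dd_mem i k hik t⟩ * m⁻¹) := hconj.symm
    _ = _ := by
        rw [← map_mul, ← map_mul, ← map_mul]
        congr 1
        apply Subtype.ext
        show (m : ↥(EquivariantPerm J n)) * dd i k t * (m : ↥(EquivariantPerm J n))⁻¹ = _
        rw [hkey]
        rfl

lemma psi_dd_dd_comm (hn : 5 ≤ n) (hmv : KerMoves ψ) {i1 k1 i2 k2 : Fin n}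
    (h1 : i1 ≠ k1) (h2 : i2 ≠ k2) (t1 t2 : J) :
    Commute (ψ ⟨dd i1 k1 t1, dd_mem i1 k1 h1 t1⟩) (ψ ⟨dd i2 k2 t2, dd_mem i2 k2 h2 t2⟩) := by
  obtain ⟨c, d, hcd, hci, hck, hdi, hdk⟩ := exists_pair_outside (card5 hn) i1 k1
  obtain ⟨τ, hτ, hτi, hτk⟩ := exists_alt_map (card5 hn) h2 hcd
  obtain ⟨c1, c2, c3, hc1, hc2, hc3, hdec⟩ := psi_dd_decomp ψ hn hmv h2 t2 hτ
  rw [hdec]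
  have hci' : τ i2 ≠ i1 := by rw [hτi]; exact hci
  have hck' : τ i2 ≠ k1 := by rw [hτi]; exact hck
  have hdi' : τ k2 ≠ i1 := by rw [hτk]; exact hdi
  have hdk' : τ k2 ≠ k1 := by rw [hτk]; exact hdk
  have comm_dd : Commute (ψ ⟨dd i1 k1 t1, dd_mem i1 k1 h1 t1⟩)
      (ψ ⟨dd (τ i2) (τ k2) t2, dd_mem (τ i2) (τ k2) (fun h => h2 (τ.injective h)) t2⟩) := by
    show _ * _ = _ * _
    rw [← map_mul, ← map_mul]
    congr 1
    apply Subtype.ext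
    show dd i1 k1 t1 * dd (τ i2) (τ k2) t2 = dd (τ i2) (τ k2) t2 * dd i1 k1 t1
    rw [dd, dd]
    apply emb_comm
    intro m
    by_cases hm1 : m = i1
    · right; rw [hm1]; exact dv_other (Ne.symm hci') (Ne.symm hdi') t2
    by_cases hm2 : m = k1
    · right; rw [hm2]; exact dv_other (Ne.symm hck') (Ne.symm hdk') t2
    · left; exact dv_other hm1 hm2 t1
  exact Commute.mul_right (Commute.mul_right (Commute.mul_right
    (psi_dd_se_comm ψ hn hmv h1 t1 (τ i2) hc1) (psi_dd_se_comm ψ hn hmv h1 t1 (τ k2) hc2))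
    comm_dd) (psi_dd_se_comm ψ hn hmv h1 t1 (τ k2) hc3)


lemma psi_se_triv (hn : 5 ≤ n) (hmv : KerMoves ψ) (i : Fin n) (u : J)
    (hu : u ∈ commutator J) : ψ ⟨se i u, se_mem i hu⟩ = 1 := by
  let S : Subgroup J :=
    { carrier := {a | ∃ h : se i a ∈ RE J n, ψ ⟨se i a, h⟩ = 1}
      one_mem' := by
        refine ⟨by rw [se_one]; exact one_mem _, ?_⟩
        have h1 : (⟨se i (1:J), by rw [se_one]; exact one_mem _⟩ : ↥(RE J n)) = 1 :=
          Subtype.ext (se_one i)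
        rw [h1, map_one]
      mul_mem' := by
        rintro a b ⟨ha1, ha2⟩ ⟨hb1, hb2⟩
        have hab : se i (a * b) = se i b * se i a := (se_mul i b a).symm
        have hmem : se i (a * b) ∈ RE J n := by rw [hab]; exact mul_mem hb1 ha1
        refine ⟨hmem, ?_⟩
        have he : (⟨se i (a * b), hmem⟩ : ↥(RE J n)) = ⟨se i b, hb1⟩ * ⟨se i a, ha1⟩ :=
          Subtype.ext hab
        rw [he, map_mul, ha2, hb2, one_mul]
      inv_mem' := by
        rintro a ⟨ha1, ha2⟩
        have hmem : se i a⁻¹ ∈ RE J n := by rw [← se_inv]; exact inv_mem ha1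
        refine ⟨hmem, ?_⟩
        have he : (⟨se i a⁻¹, hmem⟩ : ↥(RE J n)) = (⟨se i a, ha1⟩ : ↥(RE J n))⁻¹ :=
          Subtype.ext (se_inv i a).symm
        rw [he, map_inv, ha2, inv_one] }
  have hle : commutator J ≤ S := by
    rw [_root_.commutator_def, Subgroup.commutator_le]
    intro g _ h _
    obtain ⟨k, hki, -⟩ := exists_third (card3 hn) i i
    obtain ⟨l, hli, hlk⟩ := exists_third (card3 hn) i k
    have hik : i ≠ k := Ne.symm hki
    have hil : i ≠ l := Ne.symm hli
    have hkl : k ≠ l := Ne.symm hlk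
    have hcomm : se i ⁅g, h⁆ = ⁅dd i k h⁻¹, dd i l g⁻¹⁆ := by
      rw [comm_dd_dd hik hil hkl, inv_inv, inv_inv]
    have hmem : se i ⁅g, h⁆ ∈ RE J n := by
      rw [hcomm, RE]
      exact Subgroup.commutator_mem_commutator (Subgroup.mem_top _) (Subgroup.mem_top _)
    refine ⟨hmem, ?_⟩
    have he : (⟨se i ⁅g, h⁆, hmem⟩ : ↥(RE J n)) =
        ⁅(⟨dd i k h⁻¹, dd_mem i k hik h⁻¹⟩ : ↥(RE J n)), ⟨dd i l g⁻¹, dd_mem i l hil g⁻¹⟩⁆ := by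
      apply Subtype.ext
      show se i ⁅g, h⁆ = _
      rw [hcomm]
      exact (map_commutatorElement ((RE J n).subtype) ⟨dd i k h⁻¹, dd_mem i k hik h⁻¹⟩
        ⟨dd i l g⁻¹, dd_mem i l hil g⁻¹⟩).symm
    rw [he, map_commutatorElement]
    exact commutatorElement_eq_one_iff_commute.mpr
      (psi_dd_dd_comm ψ hn hmv hik hil h⁻¹ g⁻¹)
  obtain ⟨h', hval⟩ := hle hu
  exact hval

lemma psi_dd_move (hn : 5 ≤ n) (hmv : KerMoves ψ) {i k i' k' : Fin n} (hik : i ≠ k)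
    (hik' : i' ≠ k') (t : J) :
    ψ ⟨dd i k t, dd_mem i k hik t⟩ = ψ ⟨dd i' k' t, dd_mem i' k' hik' t⟩ := by
  obtain ⟨τ, hτ, hτi, hτk⟩ := exists_alt_map (card5 hn) hik hik'
  obtain ⟨c1, c2, c3, hc1, hc2, hc3, hdec⟩ := psi_dd_decomp ψ hn hmv hik t hτ
  rw [hdec, psi_se_triv ψ hn hmv _ _ hc1, psi_se_triv ψ hn hmv _ _ hc2,
    psi_se_triv ψ hn hmv _ _ hc3, one_mul, one_mul, mul_one]
  congr 1
  apply Subtype.ext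
  show dd (τ i) (τ k) t = dd i' k' t
  rw [hτi, hτk]

lemma psi_dd_triv (hn : 5 ≤ n) (hmv : KerMoves ψ) {i k : Fin n} (hik : i ≠ k) (t : J) :
    ψ ⟨dd i k t, dd_mem i k hik t⟩ = 1 := by
  obtain ⟨l, hli, hlk⟩ := exists_third (card3 hn) i k
  have hil : i ≠ l := Ne.symm hli
  have hkl : k ≠ l := Ne.symm hlk
  have hsplit : (⟨dd i l t, dd_mem i l hil t⟩ : ↥(RE J n)) =
      ⟨dd i k t, dd_mem i k hik t⟩ * ⟨dd k l t, dd_mem k l hkl t⟩ :=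
    Subtype.ext (dd_mul_dd hik hil hkl t).symm
  have h1 := psi_dd_move ψ hn hmv hkl hik t
  have h2 := psi_dd_move ψ hn hmv hil hik t
  have := congrArg ψ hsplit
  rw [map_mul, h1, h2] at this
  -- this : ψ dd i k t = ψ dd i k t * ψ dd i k t
  have hq := this
  exact (mul_eq_left.mp hq.symm)

lemma psi_base (hn : 5 ≤ n) (hmv : KerMoves ψ) (b : ↥(RE J n))
    (htop : toPHom (b : ↥(EquivariantPerm J n)) = 1) : ψ b = 1 := by
  have hlastlt : n - 1 < n := by omega
  have main : ∀ (k : ℕ) (v : Fin n → J),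
      (∀ i : Fin n, i ≠ ⟨n-1, hlastlt⟩ → k ≤ i.1 → v i = 1) →
      (∏ i, Abelianization.of (v i)) = 1 → ∀ (h : em v 1 ∈ RE J n), ψ ⟨em v 1, h⟩ = 1 := by
    intro k
    set lastI : Fin n := ⟨n-1, hlastlt⟩ with hlastdef
    induction k with
    | zero =>
      intro v hsupp hprod h
      have hv : em v 1 = se lastI (v lastI) := by
        rw [se]; congr 1; funext m
        by_cases hm : m = lastI
        · rw [hm, sv_self]
        · rw [sv_other hm, hsupp m hm (Nat.zero_le _)]
      have hprod' : Abelianization.of (v lastI) = 1 := by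
        rw [← hprod]
        symm
        apply Finset.prod_eq_single lastI
        · intro i _ hne
          rw [hsupp i hne (Nat.zero_le _), map_one]
        · intro hmem
          exact absurd (Finset.mem_univ lastI) hmem
      have hu : v lastI ∈ commutator J := (QuotientGroup.eq_one_iff (v lastI)).mp hprod'
      have heq : (⟨em v 1, h⟩ : ↥(RE J n)) = ⟨se lastI (v lastI), se_mem lastI hu⟩ :=
        Subtype.ext hv
      rw [heq]
      exact psi_se_triv ψ hn hmv lastI _ hu
    | succ k ih =>
      intro v hsupp hprod h
      by_cases hk : k < n - 1
      · set ik : Fin n := ⟨k, by omega⟩ with hikdef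
        have hik : ik ≠ lastI := by
          intro hc
          have hc' := congrArg Fin.val hc
          simp only [hikdef, hlastdef] at hc'
          omega
        set t := v ik with htdef
        set v' : Fin n → J :=
          fun m => if m = ik then 1 else if m = lastI then v lastI * t else v m with hv'def
        have hv'ik : v' ik = 1 := by
          show (if ik = ik then (1:J) else if ik = lastI then v lastI * t else v ik) = 1
          rw [if_pos rfl]
        have hv'last : v' lastI = v lastI * t := by
          show (if lastI = ik then (1:J) else if lastI = lastI then v lastI * t else v lastI) =
            v lastI * t
          rw [if_neg (fun hc => hik hc.symm), if_pos rfl]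
        have hv'other : ∀ m, m ≠ ik → m ≠ lastI → v' m = v m := by
          intro m h1 h2
          show (if m = ik then (1:J) else if m = lastI then v lastI * t else v m) = v m
          rw [if_neg h1, if_neg h2]
        have hsplit : em v 1 = dd ik lastI t * em v' 1 := by
          rw [dd, emb_mul]; congr 1; funext m
          by_cases h1 : m = ik
          · rw [h1, dv_i hik, hv'ik, one_mul]
          by_cases h2 : m = lastI
          · rw [h2, dv_k hik, hv'last, mul_inv_cancel_right]
          · rw [dv_other h1 h2, hv'other m h1 h2, mul_one]
        have hmem' : em v' 1 ∈ RE J n := by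
          have hrw : em v' 1 = (dd ik lastI t)⁻¹ * em v 1 := by rw [hsplit]; group
          rw [hrw]
          exact mul_mem (inv_mem (dd_mem ik lastI hik t)) h
        have hsupp' : ∀ i : Fin n, i ≠ lastI → k ≤ i.1 → v' i = 1 := by
          intro i hi hki
          by_cases h1 : i = ik
          · rw [h1, hv'ik]
          · have hge : k + 1 ≤ i.1 := by
              rcases Nat.lt_or_ge i.1 (k+1) with hlt | hge
              · exfalso
                apply h1
                apply Fin.ext
                simp only [hikdef]
                omega
              · exact hge
            rw [hv'other i h1 hi]
            exact hsupp i hi hge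
        have hTeq : ∏ m ∈ (Finset.univ.erase ik).erase lastI, Abelianization.of (v' m) =
            ∏ m ∈ (Finset.univ.erase ik).erase lastI, Abelianization.of (v m) := by
          apply Finset.prod_congr rfl
          intro m hm
          obtain ⟨hm1, hm2⟩ := Finset.mem_erase.mp hm
          obtain ⟨hm3, -⟩ := Finset.mem_erase.mp hm2
          rw [hv'other m hm3 hm1]
        have hlmem : lastI ∈ Finset.univ.erase ik :=
          Finset.mem_erase.mpr ⟨Ne.symm hik, Finset.mem_univ _⟩
        have e1 : ∏ m, Abelianization.of (v m) =
            Abelianization.of (v ik) * ∏ m ∈ Finset.univ.erase ik, Abelianization.of (v m) :=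
          (Finset.mul_prod_erase _ _ (Finset.mem_univ ik)).symm
        have e2 : ∏ m ∈ Finset.univ.erase ik, Abelianization.of (v m) =
            Abelianization.of (v lastI) *
              ∏ m ∈ (Finset.univ.erase ik).erase lastI, Abelianization.of (v m) :=
          (Finset.mul_prod_erase _ _ hlmem).symm
        have e1' : ∏ m, Abelianization.of (v' m) =
            Abelianization.of (v' ik) * ∏ m ∈ Finset.univ.erase ik, Abelianization.of (v' m) :=
          (Finset.mul_prod_erase _ _ (Finset.mem_univ ik)).symm
        have e2' : ∏ m ∈ Finset.univ.erase ik, Abelianization.of (v' m) =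
            Abelianization.of (v' lastI) *
              ∏ m ∈ (Finset.univ.erase ik).erase lastI, Abelianization.of (v' m) :=
          (Finset.mul_prod_erase _ _ hlmem).symm
        have hprod' : (∏ m, Abelianization.of (v' m)) = 1 := by
          rw [e1', e2', hTeq, hv'ik, hv'last, map_one, one_mul, map_mul]
          rw [e1, e2] at hprod
          calc Abelianization.of (v lastI) * Abelianization.of t *
              ∏ m ∈ (Finset.univ.erase ik).erase lastI, Abelianization.of (v m)
              = Abelianization.of (v ik) * (Abelianization.of (v lastI) *
                ∏ m ∈ (Finset.univ.erase ik).erase lastI, Abelianization.of (v m)) := by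
                rw [htdef]
                rw [mul_comm (Abelianization.of (v lastI)) (Abelianization.of (v ik)), mul_assoc]
            _ = 1 := hprod
        have heq : (⟨em v 1, h⟩ : ↥(RE J n)) =
            ⟨dd ik lastI t, dd_mem ik lastI hik t⟩ * ⟨em v' 1, hmem'⟩ :=
          Subtype.ext hsplit
        rw [heq, map_mul, psi_dd_triv ψ hn hmv hik t, one_mul]
        exact ih v' hsupp' hprod' hmem'
      · apply ih v _ hprod h
        intro i hi hki
        exfalso
        have h1 : i.1 < n := i.2
        have h2 : i.1 ≠ n - 1 := by
          intro hc
          apply hi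
          apply Fin.ext
          simp only [hlastdef]
          exact hc
        omega
  have hb : (b : ↥(EquivariantPerm J n)) = em (bv (b : ↥(EquivariantPerm J n))) 1 := by
    conv_lhs => rw [eq_em (b : ↥(EquivariantPerm J n))]
    rw [htop]
  have hprod : (∏ i, Abelianization.of (bv (b : ↥(EquivariantPerm J n)) i)) = 1 := by
    have h2 := RE_le_ker_Pa b.2
    rw [MonoidHom.mem_ker] at h2
    exact h2
  have hmem : em (bv (b : ↥(EquivariantPerm J n))) 1 ∈ RE J n := by
    rw [← hb]; exact b.2
  have heq : b = ⟨em (bv (b : ↥(EquivariantPerm J n))) 1, hmem⟩ := Subtype.ext hb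
  rw [heq]
  apply main n _ _ hprod hmem
  intro i _ hni
  exact absurd hni (by have := i.2; omega)

end Psi

section Final

open Equiv Equiv.Perm Subgroup AltSimple

variable {J : Type*} [Group J] {n : ℕ}

/-- the tautological map from `RE` (inside the equivariant group) to the Rubik group. -/
def toRub : ↥(RE J n) →* ↥(RubikGroup J n) where
  toFun x := ⟨((x : ↥(EquivariantPerm J n)) : Perm (J × Fin n)),
    (mem_RE_iff (x : ↥(EquivariantPerm J n))).mp x.2⟩
  map_one' := rfl
  map_mul' _ _ := rfl

lemma toRub_surjective : Function.Surjective (toRub (J := J) (n := n)) := by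
  intro r
  refine ⟨⟨⟨(r : Perm (J × Fin n)), Rub_le r.2⟩,
    (mem_RE_iff ⟨(r : Perm (J × Fin n)), Rub_le r.2⟩).mpr r.2⟩, ?_⟩
  apply Subtype.ext
  rfl

end Final

end Stmt10

/-- for `n ≥ 5`, the alternating group on `Fin n` is the unique simple
quotient of the Rubik group `Rub_J(J × Fin n)`. -/
theorem stmt_10 {J : Type*} [Group J] {n : ℕ} (hn : 5 ≤ n)
    {Q : Type*} [Group Q] [IsSimpleGroup Q]
    (φ : ↥(RubikGroup J n) →* Q) (hφ : Function.Surjective φ) :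
    Nonempty (Q ≃* ↥(alternatingGroup (Fin n))) := by
  classical
  open Stmt10 AltSimple Equiv Equiv.Perm Subgroup in
  set ψ : ↥(RE J n) →* Q := φ.comp toRub with hψdef
  have hψ : Function.Surjective ψ := fun q => by
    obtain ⟨r, hr⟩ := hφ q
    obtain ⟨x, hx⟩ := toRub_surjective r
    exact ⟨x, by rw [hψdef, MonoidHom.comp_apply, hx, hr]⟩
  by_cases hcase : ∀ (b : ↥(RE J n)), toPHom (b : ↥(EquivariantPerm J n)) = 1 → ψ b = 1
  · -- factor through the alternating group
    have hrange : ∀ x : ↥(RE J n),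
        (toPHom.comp (RE J n).subtype) x ∈ alternatingGroup (Fin n) := by
      intro x
      have hx : toPHom (x : ↥(EquivariantPerm J n)) ∈ Subgroup.map toPHom (RE J n) :=
        Subgroup.mem_map_of_mem _ x.2
      rwa [map_toPHom_RE] at hx
    set toA : ↥(RE J n) →* ↥(alternatingGroup (Fin n)) :=
      (toPHom.comp (RE J n).subtype).codRestrict _ hrange with htoAdef
    have hsurjA : Function.Surjective toA := by
      intro a
      have ha : (a : Perm (Fin n)) ∈ Subgroup.map toPHom (RE J n) := by
        rw [map_toPHom_RE]; exact a.2
      obtain ⟨y, hy, hyeq⟩ := Subgroup.mem_map.mp ha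
      exact ⟨⟨y, hy⟩, Subtype.ext hyeq⟩
    have hker : toA.ker ≤ ψ.ker := by
      intro x hx
      rw [MonoidHom.mem_ker] at hx ⊢
      apply hcase
      exact congrArg Subtype.val hx
    haveI : IsSimpleGroup ↥(alternatingGroup (Fin n)) :=
      isSimpleGroup_alternating (by rw [Fintype.card_fin]; omega)
    set e := QuotientGroup.quotientKerEquivOfSurjective toA hsurjA with hedef
    set ψbar : (↥(RE J n) ⧸ toA.ker) →* Q :=
      QuotientGroup.lift toA.ker ψ (fun x hx => MonoidHom.mem_ker.mp (hker hx)) with hbardef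
    set χ : ↥(alternatingGroup (Fin n)) →* Q := ψbar.comp e.symm.toMonoidHom with hχdef
    have hχmk : ∀ x : ↥(RE J n), χ (toA x) = ψ x := by
      intro x
      show ψbar (e.symm (toA x)) = ψ x
      have he : e.symm (toA x) = QuotientGroup.mk x := by
        apply e.injective
        rw [MulEquiv.apply_symm_apply]
        rfl
      rw [he]
      rfl
    have hχs : Function.Surjective χ := by
      intro q
      obtain ⟨x, hx⟩ := hψ q
      exact ⟨toA x, by rw [hχmk, hx]⟩
    rcases IsSimpleGroup.eq_bot_or_eq_top_of_normal χ.ker (MonoidHom.normal_ker χ) with hk | hk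
    · have hinj : Function.Injective χ := by
        rw [← MonoidHom.ker_eq_bot_iff]
        exact hk
      exact ⟨(MulEquiv.ofBijective χ ⟨hinj, hχs⟩).symm⟩
    · exfalso
      obtain ⟨q, hq⟩ := exists_ne (1 : Q)
      obtain ⟨a, ha⟩ := hχs q
      have ha1 : χ a = 1 := by
        have hm : a ∈ χ.ker := by rw [hk]; trivial
        rwa [MonoidHom.mem_ker] at hm
      exact hq (by rw [← ha, ha1])
  · exfalso
    push_neg at hcase
    obtain ⟨b0, hb0top, hb0ne⟩ := hcase
    set K : Subgroup ↥(RE J n) := (toPHom.comp (RE J n).subtype).ker with hKdef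
    have hb0K : b0 ∈ K := by
      rw [hKdef, MonoidHom.mem_ker]
      exact hb0top
    set Z : Subgroup Q := Subgroup.map ψ K with hZdef
    have hZn : Z.Normal :=
      Subgroup.Normal.map (MonoidHom.normal_ker _) ψ hψ
    have hZtop : Z = ⊤ := by
      rcases IsSimpleGroup.eq_bot_or_eq_top_of_normal Z hZn with hbot | htop
      · exfalso
        apply hb0ne
        have hmem : ψ b0 ∈ Z := Subgroup.mem_map_of_mem _ hb0K
        rw [hbot] at hmem
        exact Subgroup.mem_bot.mp hmem
      · exact htop
    have hmv : KerMoves ψ := by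
      intro τ hτ
      have hτ' : τ ∈ Subgroup.map toPHom (RE J n) := by rw [map_toPHom_RE]; exact hτ
      obtain ⟨y, hy, hyτ⟩ := Subgroup.mem_map.mp hτ'
      have hmem : ψ ⟨y, hy⟩ ∈ Z := by rw [hZtop]; trivial
      obtain ⟨kk, hkk, hkeq⟩ := Subgroup.mem_map.mp hmem
      refine ⟨⟨y, hy⟩ * kk⁻¹, ?_, ?_⟩
      · rw [map_mul, map_inv, hkeq, mul_inv_cancel]
      · have hkk1 : toPHom ((kk : ↥(RE J n)) : ↥(EquivariantPerm J n)) = 1 := by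
          rw [hKdef, MonoidHom.mem_ker] at hkk
          exact hkk
        have hco : ((⟨y, hy⟩ * kk⁻¹ : ↥(RE J n)) : ↥(EquivariantPerm J n)) =
            y * ((kk : ↥(EquivariantPerm J n)))⁻¹ := rfl
        rw [hco, map_mul, map_inv, hyτ, hkk1, inv_one, mul_one]
    exact hb0ne (psi_base ψ hn hmv b0 hb0top)
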